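/- Pointwise derivative formula for the negative part of the residual: fix s ∈ ℝ^N, x ∈ ℝ^N and indices 1 ≤ k ≤ ℓ ≤ N, and suppose ξ_t(x, s) ≠ 0 for every t ∈ {k, …, ℓ}. Then the function g(y) = max{0, −ξ_ℓ(x[k ↦ y], s)} is differentiable at y = x_k with derivative g′(x_k) = 1{ξ_ℓ(x,s) < 0} · Π_{t=k}^{ℓ−1} 1{ξ_t(x,s) > 0} (the empty product for ℓ = k equals 1). -/

import Mathlib

/-- The residual process: `ξ_0 = 0`, `ξ_{k+1} = max{0, ξ_k} + s_k - x_{k+1}`. -/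
noncomputable def resid (x s : ℕ → ℝ) : ℕ → ℝ
  | 0 => 0
  | k + 1 => max 0 (resid x s k) + s k - x (k + 1)

lemma resid_update_of_lt (x s : ℕ → ℝ) (k : ℕ) (y : ℝ) :
    ∀ t, t < k → resid (Function.update x k y) s t = resid x s t := by
  intro t
  induction t with
  | zero => intro _; simp [resid]
  | succ n ih =>
    intro h
    have hn : n < k := Nat.lt_of_succ_lt h
    simp [resid, ih hn, Function.update_of_ne (Nat.ne_of_lt h)]

lemma resid_hasDerivAt (x s : ℕ → ℝ) (k : ℕ) (hk : 1 ≤ k) :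
    ∀ l, k ≤ l → (∀ t, k ≤ t → t < l → resid x s t ≠ 0) →
      HasDerivAt (fun y : ℝ => resid (Function.update x k y) s l)
        (-(∏ t ∈ Finset.Ico k l, (if 0 < resid x s t then (1 : ℝ) else 0))) (x k) := by
  intro l hkl
  induction l, hkl using Nat.le_induction with
  | base =>
    intro _
    obtain ⟨m, rfl⟩ := Nat.exists_eq_add_of_le hk
    simp only [Nat.add_comm 1 m]
    have heq : (fun y : ℝ => resid (Function.update x (m + 1) y) s (m + 1))
        = fun y : ℝ => max 0 (resid x s m) + s m - y := by
      funext y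
      simp [resid, resid_update_of_lt x s (m + 1) y m (Nat.lt_succ_self m)]
    rw [heq, Finset.Ico_self, Finset.prod_empty]
    exact (hasDerivAt_id (x (m + 1))).const_sub _
  | succ l hkl ih =>
    intro hne
    have hRd := ih (fun t ht ht' => hne t ht (Nat.lt_succ_of_lt ht'))
    set R : ℝ → ℝ := fun y => resid (Function.update x k y) s l with hRdef
    have hRx : R (x k) = resid x s l := by
      simp [hRdef, Function.update_eq_self]
    have hxl1 : Function.update x k = fun y => Function.update x k y := rfl
    have heq : (fun y : ℝ => resid (Function.update x k y) s (l + 1))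
        = fun y : ℝ => max 0 (R y) + s l - x (l + 1) := by
      funext y
      simp [resid, hRdef, Function.update_of_ne (by omega : l + 1 ≠ k)]
    rw [heq, Finset.prod_Ico_succ_top hkl]
    have hne_l : resid x s l ≠ 0 := hne l hkl (Nat.lt_succ_self l)
    rcases hne_l.lt_or_gt with hneg | hpos
    · -- resid x s l < 0 : max is locally 0
      have hev : ∀ᶠ y in nhds (x k), R y < 0 := by
        have := hRd.continuousAt
        rw [hRdef] at this
        have h2 : ∀ᶠ z in nhds (R (x k)), z < 0 := by
          rw [hRx]; exact eventually_lt_nhds hneg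
        exact this.eventually h2
      have hfeq : (fun y : ℝ => max 0 (R y) + s l - x (l + 1))
          =ᶠ[nhds (x k)] (fun _ : ℝ => 0 + s l - x (l + 1)) := by
        filter_upwards [hev] with y hy
        rw [max_eq_left hy.le]
      have h0 : HasDerivAt (fun _ : ℝ => (0 : ℝ) + s l - x (l + 1)) 0 (x k) :=
        hasDerivAt_const _ _
      have := h0.congr_of_eventuallyEq hfeq
      refine this.congr_deriv ?_
      rw [if_neg (not_lt.mpr hneg.le)]
      ring
    · -- 0 < resid x s l : max is locally R
      have hev : ∀ᶠ y in nhds (x k), 0 < R y := by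
        have := hRd.continuousAt
        rw [hRdef] at this
        have h2 : ∀ᶠ z in nhds (R (x k)), 0 < z := by
          rw [hRx]; exact eventually_gt_nhds hpos
        exact this.eventually h2
      have hfeq : (fun y : ℝ => max 0 (R y) + s l - x (l + 1))
          =ᶠ[nhds (x k)] (fun y : ℝ => R y + s l - x (l + 1)) := by
        filter_upwards [hev] with y hy
        rw [max_eq_right hy.le]
      have hR' : HasDerivAt (fun y : ℝ => R y + s l - x (l + 1))
          (-(∏ t ∈ Finset.Ico k l, (if 0 < resid x s t then (1 : ℝ) else 0))) (x k) :=
        (hRd.add_const _).sub_const _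
      have := hR'.congr_of_eventuallyEq hfeq
      refine this.congr_deriv ?_
      rw [if_pos hpos]
      ring

/-- Pointwise derivative formula for the negative part of the residual:
fix `s`, `x` and indices `1 ≤ k ≤ ℓ ≤ N`, and suppose `ξ_t(x, s) ≠ 0` for every
`t ∈ {k, …, ℓ}`.  Then `g(y) = max{0, -ξ_ℓ(x[k ↦ y], s)}` is differentiable at
`y = x_k` with derivative
`g′(x_k) = 1{ξ_ℓ(x,s) < 0} · Π_{t=k}^{ℓ-1} 1{ξ_t(x,s) > 0}`
(the empty product for `ℓ = k` equals `1`). -/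
theorem resid_neg_part_hasDerivAt
    (N : ℕ) (hN : 1 ≤ N) (x s : ℕ → ℝ)
    (k l : ℕ) (hk : 1 ≤ k) (hkl : k ≤ l) (hlN : l ≤ N)
    (hne : ∀ t, k ≤ t → t ≤ l → resid x s t ≠ 0) :
    HasDerivAt (fun y : ℝ => max 0 (-(resid (Function.update x k y) s l)))
      ((if resid x s l < 0 then (1 : ℝ) else 0) *
        ∏ t ∈ Finset.Ico k l, (if 0 < resid x s t then (1 : ℝ) else 0))
      (x k) := by
  have hRd := resid_hasDerivAt x s k hk l hkl
    (fun t ht ht' => hne t ht (Nat.le_of_lt ht'))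
  set R : ℝ → ℝ := fun y => resid (Function.update x k y) s l with hRdef
  have hRx : R (x k) = resid x s l := by
    simp [hRdef, Function.update_eq_self]
  have hne_l : resid x s l ≠ 0 := hne l hkl le_rfl
  rcases hne_l.lt_or_gt with hneg | hpos
  · -- resid x s l < 0 : locally g = -R
    have hev : ∀ᶠ y in nhds (x k), R y < 0 := by
      have := hRd.continuousAt
      rw [hRdef] at this
      have h2 : ∀ᶠ z in nhds (R (x k)), z < 0 := by
        rw [hRx]; exact eventually_lt_nhds hneg
      exact this.eventually h2
    have hfeq : (fun y : ℝ => max 0 (-(R y))) =ᶠ[nhds (x k)] (fun y : ℝ => -(R y)) := by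
      filter_upwards [hev] with y hy
      rw [max_eq_right (by linarith)]
    have := hRd.neg.congr_of_eventuallyEq hfeq
    refine this.congr_deriv ?_
    rw [if_pos hneg]
    ring
  · -- 0 < resid x s l : locally g = 0
    have hev : ∀ᶠ y in nhds (x k), 0 < R y := by
      have := hRd.continuousAt
      rw [hRdef] at this
      have h2 : ∀ᶠ z in nhds (R (x k)), 0 < z := by
        rw [hRx]; exact eventually_gt_nhds hpos
      exact this.eventually h2
    have hfeq : (fun y : ℝ => max 0 (-(R y))) =ᶠ[nhds (x k)] (fun _ : ℝ => (0 : ℝ)) := by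
      filter_upwards [hev] with y hy
      rw [max_eq_left (by linarith)]
    have := (hasDerivAt_const (x k) (0 : ℝ)).congr_of_eventuallyEq hfeq
    refine this.congr_deriv ?_
    rw [if_neg (not_lt.mpr hpos.le)]
    ring
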